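/- The top-variable inference system T-Inf is sound: every application of its rules preserves satisfiability. In particular, the conclusions of the rules Res, TRes, Fact and Conden are logical consequences of their premises; Delete removes only tautologies or variants; a clause set N ∪ {C ∨ D} with C and D non-empty and variable-disjoint is satisfiable iff N ∪ {C} or N ∪ {D} is satisfiable (Split); and the separation rule Sep replaces a clause set by an equisatisfiable one. -/

import Mathlib

/-!
Common formalization of first-order clausal logic (without equality), following
"Resolution-based query answering and rewriting for the (loosely) guarded fragment".
-/

set_option linter.unusedVariables false

namespace QGF

/-- Symbols: function symbols, constant symbols and predicate symbols, each indexed by ℕ. -/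
inductive Head : Type
  | fn : ℕ → Head
  | cn : ℕ → Head
  | pr : ℕ → Head
  deriving DecidableEq

/-- First-order terms.  A constant `c` is represented as `Term.app (Head.cn c) []`. -/
inductive Term : Type
  | var : ℕ → Term
  | app : Head → List Term → Term

namespace Term

def isVar : Term → Prop
  | var _ => True
  | _ => False

def isConst : Term → Prop
  | app (.cn _) [] => True
  | _ => False

/-- A compound term is a term that is neither a variable nor a constant. -/
def isCompound (t : Term) : Prop := ¬ t.isVar ∧ ¬ t.isConst

/-- Occurrence of a variable in a term. -/
inductive HasVar : Term → ℕ → Prop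
  | var (x : ℕ) : HasVar (var x) x
  | app {h : Head} {ts : List Term} {x : ℕ} {t : Term} :
      t ∈ ts → HasVar t x → HasVar (app h ts) x

def vars (t : Term) : Set ℕ := {x | t.HasVar x}

/-- Subterm relation. -/
inductive SubtermOf : Term → Term → Prop
  | refl (t : Term) : SubtermOf t t
  | app {s : Term} {h : Head} {ts : List Term} {t : Term} :
      t ∈ ts → SubtermOf s t → SubtermOf s (app h ts)

/-- Depth of a term: variables and constants have depth 0. -/
def depth : Term → ℕ
  | var _ => 0
  | app _ ts => (ts.attach.map fun t => depth t.1 + 1).foldr max 0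
  decreasing_by
    have := List.sizeOf_lt_of_mem t.2
    simp only [Term.app.sizeOf_spec]
    omega

/-- Applying a substitution to a term. -/
def subst (σ : ℕ → Term) : Term → Term
  | var x => σ x
  | app h ts => app h (ts.attach.map fun t => subst σ t.1)
  decreasing_by
    have := List.sizeOf_lt_of_mem t.2
    simp only [Term.app.sizeOf_spec]
    omega

def isGround (t : Term) : Prop := t.vars = ∅

/-- An argument is flat if it is a variable or a constant. -/
def flatArg (t : Term) : Prop := t.isVar ∨ t.isConst

/-- An argument is simple if it is a variable, a constant, or a compound term all of
whose arguments are variables or constants. -/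
def simpleArg : Term → Prop
  | var _ => True
  | app _ ts => ∀ u ∈ ts, flatArg u

end Term

/-- Substitutions. -/
abbrev Subst := ℕ → Term

/-- Atoms. -/
structure Atom where
  pred : ℕ
  args : List Term

namespace Atom

def subst (σ : Subst) (a : Atom) : Atom := ⟨a.pred, a.args.map (Term.subst σ)⟩

def vars (a : Atom) : Set ℕ := {x | ∃ t ∈ a.args, x ∈ t.vars}

def flat (a : Atom) : Prop := ∀ t ∈ a.args, t.flatArg

def simple (a : Atom) : Prop := ∀ t ∈ a.args, t.simpleArg

def ground (a : Atom) : Prop := a.vars = ∅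

/-- An atom `P(t₁,…,tₙ)` viewed as the term with head the predicate symbol `P`. -/
def toTerm (a : Atom) : Term := .app (.pr a.pred) a.args

end Atom

/-- Literals. -/
structure Lit where
  pos : Bool
  atom : Atom

def Lit.mkPos (a : Atom) : Lit := ⟨true, a⟩
def Lit.mkNeg (a : Atom) : Lit := ⟨false, a⟩

namespace Lit

def subst (σ : Subst) (L : Lit) : Lit := ⟨L.pos, L.atom.subst σ⟩

def vars (L : Lit) : Set ℕ := L.atom.vars

def ground (L : Lit) : Prop := L.vars = ∅

def flat (L : Lit) : Prop := L.atom.flat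

def simple (L : Lit) : Prop := L.atom.simple

/-- Occurrence of a term in a literal (as a subterm of an argument). -/
def hasTerm (L : Lit) (t : Term) : Prop := ∃ u ∈ L.atom.args, t.SubtermOf u

def hasCompound (L : Lit) : Prop := ∃ t, L.hasTerm t ∧ t.isCompound

/-- A literal is covering if every compound term occurring in it contains exactly the
variables of the literal. -/
def covering (L : Lit) : Prop := ∀ t, L.hasTerm t → t.isCompound → t.vars = L.vars

end Lit

/-- A clause is a (multi)set of literals, represented as a list, read disjunctively,
with all variables implicitly universally quantified. -/
abbrev Clause := List Lit

namespace Clause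

def subst (σ : Subst) (C : Clause) : Clause := C.map (Lit.subst σ)

def vars (C : Clause) : Set ℕ := {x | ∃ L ∈ C, x ∈ L.vars}

def ground (C : Clause) : Prop := vars C = ∅

def flat (C : Clause) : Prop := ∀ L ∈ C, L.flat

def simple (C : Clause) : Prop := ∀ L ∈ C, L.simple

def hasTerm (C : Clause) (t : Term) : Prop := ∃ L ∈ C, L.hasTerm t

/-- A clause is covering if every compound term occurring in it contains exactly the
variables of the clause. -/
def covering (C : Clause) : Prop := ∀ t, hasTerm C t → t.isCompound → t.vars = vars C

def hasNegCompound (C : Clause) : Prop := ∃ L ∈ C, L.pos = false ∧ L.hasCompound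

def hasCompound (C : Clause) : Prop := ∃ L ∈ C, L.hasCompound

/-- The predicate symbols occurring in a clause. -/
def preds (C : Clause) : Set ℕ := {p | ∃ L ∈ C, L.atom.pred = p}

/-- The depth of a clause: the maximal depth of a term occurring in it. -/
def depth (C : Clause) : ℕ :=
  (C.map fun L => (L.atom.args.map Term.depth).foldr max 0).foldr max 0

end Clause

/-- `L` is a guard of `C`:  a negative flat literal of `C` containing all variables of `C`. -/
def Lit.isGuardOf (L : Lit) (C : Clause) : Prop :=
  L ∈ C ∧ L.pos = false ∧ L.flat ∧ L.vars = Clause.vars C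

/-- Guarded clauses (Definition 3.3). -/
def Clause.guarded (C : Clause) : Prop :=
  Clause.simple C ∧ Clause.covering C ∧ (Clause.ground C ∨ ∃ L : Lit, L.isGuardOf C)

/-- `G` is a set of loose guards of `C`. -/
def Clause.looseGuardsOf (G : List Lit) (C : Clause) : Prop :=
  (∀ L ∈ G, L ∈ C ∧ L.pos = false ∧ L.flat) ∧
  (∀ x ∈ Clause.vars C, ∃ L ∈ G, x ∈ L.vars) ∧
  (∀ x ∈ Clause.vars C, ∀ y ∈ Clause.vars C, x ≠ y → ∃ L ∈ G, x ∈ L.vars ∧ y ∈ L.vars)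

/-- Loosely guarded clauses (Definition 3.3). -/
def Clause.looselyGuarded (C : Clause) : Prop :=
  Clause.simple C ∧ Clause.covering C ∧
    (Clause.ground C ∨ ∃ G : List Lit, Clause.looseGuardsOf G C)

/-- Query clauses: flat clauses containing only negative literals (Definition 3.2). -/
def Clause.query (C : Clause) : Prop := Clause.flat C ∧ ∀ L ∈ C, L.pos = false

/-! ### Semantics -/

/-- First-order interpretations. -/
structure Interp : Type 1 where
  dom : Type
  nonempty : Nonempty dom
  fn : Head → List dom → dom
  pr : ℕ → List dom → Prop

def Term.eval (I : Interp) (ν : ℕ → I.dom) : Term → I.dom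
  | .var x => ν x
  | .app h ts => I.fn h (ts.attach.map fun t => Term.eval I ν t.1)
  decreasing_by
    have := List.sizeOf_lt_of_mem t.2
    simp only [Term.app.sizeOf_spec]
    omega

def Atom.holds (I : Interp) (ν : ℕ → I.dom) (a : Atom) : Prop :=
  I.pr a.pred (a.args.map (Term.eval I ν))

def Lit.holds (I : Interp) (ν : ℕ → I.dom) (L : Lit) : Prop :=
  if L.pos then L.atom.holds I ν else ¬ L.atom.holds I ν

/-- A clause holds under a valuation if one of its literals does. -/
def Clause.holdsUnder (I : Interp) (ν : ℕ → I.dom) (C : Clause) : Prop :=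
  ∃ L ∈ C, L.holds I ν

/-- A clause is true in an interpretation if its universal closure holds. -/
def Clause.trueIn (I : Interp) (C : Clause) : Prop := ∀ ν, Clause.holdsUnder I ν C

def Interp.models (I : Interp) (N : Set Clause) : Prop := ∀ C ∈ N, Clause.trueIn I C

/-- Satisfiability of a set of clauses. -/
def satisfiable (N : Set Clause) : Prop := ∃ I : Interp, I.models N

/-- Logical consequence:  every model of `N` is a model of `C`. -/
def entails (N : Set Clause) (C : Clause) : Prop :=
  ∀ I : Interp, I.models N → Clause.trueIn I C

/-- A tautology is a clause true in every interpretation. -/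
def Tautology (C : Clause) : Prop := ∀ (I : Interp) (ν : ℕ → I.dom), Clause.holdsUnder I ν C

/-- Two clauses are variants if each is an instance of the other. -/
def Variant (C D : Clause) : Prop :=
  (∃ σ : Subst, Clause.subst σ C = D) ∧ (∃ ρ : Subst, Clause.subst ρ D = C)

/-! ### Unification -/

def Unifies (σ : Subst) (a b : Atom) : Prop := a.subst σ = b.subst σ

/-- Most general unifiers. -/
def IsMGU (σ : Subst) (a b : Atom) : Prop :=
  Unifies σ a b ∧ ∀ θ : Subst, Unifies θ a b → ∃ ρ : Subst, ∀ x, (σ x).subst ρ = θ x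

def Lit.unifies (σ : Subst) (L1 L2 : Lit) : Prop := L1.subst σ = L2.subst σ

def Lit.isMGU (σ : Subst) (L1 L2 : Lit) : Prop :=
  Lit.unifies σ L1 L2 ∧ ∀ θ : Subst, Lit.unifies θ L1 L2 → ∃ ρ : Subst, ∀ x, (σ x).subst ρ = θ x

def UnifiesAll (σ : Subst) (ps : List (Atom × Atom)) : Prop :=
  ∀ p ∈ ps, Atom.subst σ p.1 = Atom.subst σ p.2

/-- Simultaneous most general unifiers. -/
def IsSimMGU (σ : Subst) (ps : List (Atom × Atom)) : Prop :=
  UnifiesAll σ ps ∧ ∀ θ : Subst, UnifiesAll θ ps → ∃ ρ : Subst, ∀ x, (σ x).subst ρ = θ x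

/-! ### Condensation, separability -/

/-- `D` is a subclause of `C` (as multisets). -/
def SubClause (D C : Clause) : Prop := (↑D : Multiset Lit) ≤ (↑C : Multiset Lit)

/-- `D` is a condensation of `C`: a proper subclause of `C` which is an instance of `C`
(up to duplicate literals). -/
def IsCondensation (D C : Clause) : Prop :=
  SubClause D C ∧ D.length < C.length ∧
    ∃ σ : Subst, ∀ L : Lit, L ∈ D ↔ L ∈ Clause.subst σ C

/-- A clause `C ∨ D` is separable into `C` and `D` if both are non-empty and neither
variable set is included in the other. -/
def Separable (C D : Clause) : Prop :=
  C ≠ [] ∧ D ≠ [] ∧ ¬ Clause.vars C ⊆ Clause.vars D ∧ ¬ Clause.vars D ⊆ Clause.vars C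

/-- A clause is indecomposable if it cannot be partitioned into two non-empty
variable-disjoint subclauses. -/
def Clause.indecomposable (C : Clause) : Prop :=
  ¬ ∃ D E : Clause, D ≠ [] ∧ E ≠ [] ∧
      (↑C : Multiset Lit) = (↑D : Multiset Lit) + (↑E : Multiset Lit) ∧
      Clause.vars D ∩ Clause.vars E = ∅

/-- The predicate symbols occurring in a clause set. -/
def SetPreds (N : Set Clause) : Set ℕ := {p | ∃ C ∈ N, p ∈ Clause.preds C}

/-! ### Orderings -/

namespace Head

def rank : Head → ℕ
  | .pr _ => 0
  | .cn _ => 1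
  | .fn _ => 2

def idx : Head → ℕ
  | .pr n => n
  | .cn n => n
  | .fn n => n

/-- The precedence: every function symbol is greater than every constant, and every
constant is greater than every predicate symbol. -/
def prec (g h : Head) : Prop := g.rank < h.rank ∨ (g.rank = h.rank ∧ g.idx < h.idx)

end Head

/-- The lexicographic path ordering on terms induced by the precedence `Head.prec`.
`LpoGT s t` means `s ≻_lpo t`. -/
inductive LpoGT : Term → Term → Prop
  | subRefl {h : Head} {ss : List Term} {t : Term} :
      t ∈ ss → LpoGT (.app h ss) t
  | sub {h : Head} {ss : List Term} {t : Term} (s : Term) :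
      s ∈ ss → LpoGT s t → LpoGT (.app h ss) t
  | prec {h g : Head} {ss ts : List Term} :
      Head.prec g h → (∀ t ∈ ts, LpoGT (.app h ss) t) → LpoGT (.app h ss) (.app g ts)
  | lex {h : Head} {ss ts u ss' ts' : List Term} {s t : Term} :
      ss = u ++ s :: ss' → ts = u ++ t :: ts' → LpoGT s t →
      (∀ t' ∈ ts, LpoGT (.app h ss) t') → LpoGT (.app h ss) (.app h ts)

/-- The induced lexicographic path ordering on literals, where a negative literal is
greater than the corresponding positive literal. -/
def Lit.lpoGT (L1 L2 : Lit) : Prop :=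
  LpoGT L1.atom.toTerm L2.atom.toTerm ∨
    (L1.atom.toTerm = L2.atom.toTerm ∧ L1.pos = false ∧ L2.pos = true)

/-- Admissible orderings on literals; `ord L L'` means `L ≻ L'`. -/
structure Admissible (ord : Lit → Lit → Prop) : Prop where
  trans : ∀ {a b c : Lit}, ord a b → ord b c → ord a c
  irrefl : ∀ a : Lit, ¬ ord a a
  totalGround : ∀ a b : Lit, a.ground → b.ground → a = b ∨ ord a b ∨ ord b a
  wfGround : WellFounded fun a b : Lit => a.ground ∧ b.ground ∧ ord b a
  liftable : ∀ (a b : Lit) (σ : Subst), ord a b → ord (a.subst σ) (b.subst σ)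
  negGtPos : ∀ a : Atom, a.ground → ord (Lit.mkNeg a) (Lit.mkPos a)
  negCompat : ∀ a b : Atom, a.ground → b.ground →
    ord (Lit.mkPos b) (Lit.mkPos a) → ord (Lit.mkPos b) (Lit.mkNeg a)

/-- The multiset extension of a literal ordering to clauses; `ClauseGT ord C D` means
`C ≻ D`. -/
def ClauseGT (ord : Lit → Lit → Prop) (C D : Clause) : Prop :=
  ∃ X Y Z : Multiset Lit,
    (↑C : Multiset Lit) = Z + X ∧ (↑D : Multiset Lit) = Z + Y ∧ X ≠ 0 ∧
      ∀ y ∈ Y, ∃ x ∈ X, ord x y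

/-- `L` is maximal with respect to a clause `C` (`C` not necessarily containing `L`):
some ground instance of `L` is not smaller than the corresponding instances of the
literals of `C`. -/
def maxIn (ord : Lit → Lit → Prop) (L : Lit) (C : Clause) : Prop :=
  ∃ σ : Subst, Lit.ground (L.subst σ) ∧ Clause.ground (Clause.subst σ C) ∧
    ∀ L' ∈ C, ¬ ord (Lit.subst σ L') (Lit.subst σ L)

/-- `L` is strictly maximal with respect to a clause `C`. -/
def strictMaxIn (ord : Lit → Lit → Prop) (L : Lit) (C : Clause) : Prop :=
  ∃ σ : Subst, Lit.ground (L.subst σ) ∧ Clause.ground (Clause.subst σ C) ∧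
    ∀ L' ∈ C, ord (Lit.subst σ L) (Lit.subst σ L')

/-! ### Redundancy -/

def GroundInstanceOf (D C : Clause) : Prop := (∃ σ : Subst, D = Clause.subst σ C) ∧ Clause.ground D

/-- Redundancy of a clause with respect to a clause set `N`:  every ground instance is
entailed by finitely many smaller ground instances of clauses of `N`. -/
def redundantClause (ord : Lit → Lit → Prop) (N : Set Clause) (C : Clause) : Prop :=
  ∀ D : Clause, GroundInstanceOf D C →
    ∃ S : Finset Clause, (∀ E ∈ S, ∃ C' ∈ N, GroundInstanceOf E C') ∧
      entails (↑S) D ∧ ∀ E ∈ S, ClauseGT ord D E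

/-- An inference is redundant in `N` if a premise is redundant, or its conclusion is
redundant in `N` or belongs to `N`. -/
def RedundantInference (ord : Lit → Lit → Prop) (N : Set Clause)
    (premises : List Clause) (concl : Clause) : Prop :=
  (∃ p ∈ premises, redundantClause ord N p) ∨ redundantClause ord N concl ∨ concl ∈ N

/-! ### Selection and eligibility -/

/-- Selection functions: select a set of negative literals of a clause. -/
def SelFn := Clause → Set Lit

def SelOK (sel : SelFn) : Prop := ∀ C : Clause, ∀ L ∈ sel C, L ∈ C ∧ L.pos = false

/-- A literal is eligible if it is selected, or nothing is selected and it is maximal. -/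
def Eligible (ord : Lit → Lit → Prop) (sel : SelFn) (C : Clause) (L : Lit) : Prop :=
  (sel C = ∅ ∧ L ∈ C ∧ maxIn ord L C) ∨ L ∈ sel C

/-- Eligibility under the refinement T-Refine (Algorithm 1), in the cases not depending
on side premises:  maximal literals for ground clauses and clauses with positive
compound terms, a selected negative compound-term literal, or a selected guard. -/
def EligibleTR (C : Clause) (L : Lit) : Prop :=
  L ∈ C ∧
    ((Clause.ground C ∧ maxIn Lit.lpoGT L C) ∨
     (¬ Clause.ground C ∧ Clause.hasNegCompound C ∧ L.pos = false ∧ L.hasCompound) ∨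
     (¬ Clause.ground C ∧ ¬ Clause.hasNegCompound C ∧ Clause.hasCompound C ∧
        maxIn Lit.lpoGT L C) ∨
     (¬ Clause.ground C ∧ ¬ Clause.hasCompound C ∧ L.isGuardOf C))

/-! ### Top-variable resolution -/

/-- `x` is a top variable of the negative atoms `A i` with respect to the candidate
unifier `σ'`:  the depth of `σ' x` is maximal. -/
def IsTopVar (n : ℕ) (A : Fin n → Atom) (σ' : Subst) (x : ℕ) : Prop :=
  (∃ i, x ∈ (A i).vars) ∧
    ∀ y : ℕ, (∃ i, y ∈ (A i).vars) → (σ' y).depth ≤ (σ' x).depth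

/-- The data of an application of the top-variable resolution rule TRes:
main premise `¬A₁ ∨ … ∨ ¬Aₙ ∨ D`,  side premises `Bᵢ ∨ Dᵢ`,
`σ'` a simultaneous mgu of all `n` pairs used to compute top variables, and
`σ` a simultaneous mgu of the first `m` (top-variable) pairs. -/
structure TResApp where
  n : ℕ
  m : ℕ
  A : Fin n → Atom
  B : Fin n → Atom
  Ds : Fin n → Clause
  D : Clause
  σ' : Subst
  σ : Subst

namespace TResApp

def mainPremise (t : TResApp) : Clause :=
  (List.ofFn fun i => Lit.mkNeg (t.A i)) ++ t.D

def sidePremise (t : TResApp) (i : Fin t.n) : Clause :=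
  Lit.mkPos (t.B i) :: t.Ds i

def sidePremises (t : TResApp) : List Clause := List.ofFn t.sidePremise

def resolvent (t : TResApp) : Clause :=
  Clause.subst t.σ
    ((((List.finRange t.n).filter fun i => i.1 < t.m).flatMap t.Ds) ++
     (((List.finRange t.n).filter fun i => t.m ≤ i.1).map fun i => Lit.mkNeg (t.A i)) ++
     t.D)

/-- Side conditions of the TRes rule. -/
def wf (ord : Lit → Lit → Prop) (t : TResApp) : Prop :=
  0 < t.m ∧ t.m ≤ t.n ∧
  (∀ L ∈ t.D, L.pos = true) ∧
  IsSimMGU t.σ' ((List.finRange t.n).map fun i => (t.A i, t.B i)) ∧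
  IsSimMGU t.σ (((List.finRange t.n).filter fun i => i.1 < t.m).map fun i => (t.A i, t.B i)) ∧
  (∀ i : Fin t.n, i.1 < t.m ↔ ∃ x, IsTopVar t.n t.A t.σ' x ∧ x ∈ (t.A i).vars) ∧
  (∀ i, strictMaxIn ord (Lit.mkPos (t.B i)) (t.Ds i)) ∧
  (∀ i, Clause.vars (t.sidePremise i) ∩ Clause.vars t.mainPremise = ∅) ∧
  (∀ i j, i ≠ j → Clause.vars (t.sidePremise i) ∩ Clause.vars (t.sidePremise j) = ∅)

end TResApp

/-! ### The generating inferences of T-Inf -/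

/-- The conclusion-generating inferences of the top-variable inference system T-Inf:
ordered resolution with selection (Res), ordered factoring (Fact), and top-variable
resolution (TRes). `TInfInf ord sel ps c` means `c` is the conclusion of an inference
with premises `ps`. -/
inductive TInfInf (ord : Lit → Lit → Prop) (sel : SelFn) : List Clause → Clause → Prop
  | res {B A : Atom} {D1 D : Clause} {σ : Subst} :
      IsMGU σ A B →
      sel (Lit.mkPos B :: D1) = ∅ →
      strictMaxIn ord (Lit.mkPos B) D1 →
      Eligible ord sel (Lit.mkNeg A :: D) (Lit.mkNeg A) →
      Clause.vars (Lit.mkPos B :: D1) ∩ Clause.vars (Lit.mkNeg A :: D) = ∅ →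
      TInfInf ord sel [Lit.mkPos B :: D1, Lit.mkNeg A :: D] (Clause.subst σ (D1 ++ D))
  | fact {A1 A2 : Atom} {C : Clause} {σ : Subst} :
      IsMGU σ A1 A2 →
      sel (C ++ [Lit.mkPos A1, Lit.mkPos A2]) = ∅ →
      maxIn ord (Lit.mkPos A1) (C ++ [Lit.mkPos A2]) →
      TInfInf ord sel [C ++ [Lit.mkPos A1, Lit.mkPos A2]] (Clause.subst σ (C ++ [Lit.mkPos A1]))
  | tres (t : TResApp) :
      t.wf ord →
      (∀ i, sel (t.sidePremise i) = ∅) →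
      (∀ i : Fin t.n, i.1 < t.m → Lit.mkNeg (t.A i) ∈ sel t.mainPremise) →
      TInfInf ord sel (t.sidePremises ++ [t.mainPremise]) t.resolvent

/-- `N` is saturated up to redundancy with respect to the inference system `inf`:
every inference from non-redundant premises of `N` is redundant in `N`. -/
def SaturatedUpToRedundancy (ord : Lit → Lit → Prop)
    (inf : List Clause → Clause → Prop) (N : Set Clause) : Prop :=
  ∀ (ps : List Clause) (c : Clause), inf ps c → (∀ p ∈ ps, p ∈ N) →
    RedundantInference ord N ps c


/-! ### Surface literals, chained and isolated variables of query clauses -/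

/-- `L` is a surface literal of `Q`: no other literal of `Q` has a strictly larger
variable set. -/
def SurfaceLit (Q : Clause) (L : Lit) : Prop :=
  L ∈ Q ∧ ∀ L' ∈ Q, ¬ (L.vars ⊂ L'.vars)

/-- `x` is a chained variable of `Q`: it occurs in two distinct surface literals with
different, mutually non-inclusive variable sets. -/
def ChainedVar (Q : Clause) (x : ℕ) : Prop :=
  ∃ L L' : Lit, SurfaceLit Q L ∧ SurfaceLit Q L' ∧ L ≠ L' ∧
    ¬ L.vars ⊆ L'.vars ∧ ¬ L'.vars ⊆ L.vars ∧ x ∈ L.vars ∧ x ∈ L'.vars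

/-- `x` is an isolated variable of `Q`: a variable of `Q` that is not chained. -/
def IsolatedVar (Q : Clause) (x : ℕ) : Prop := x ∈ Clause.vars Q ∧ ¬ ChainedVar Q x

/-- A query clause is isolated-only if all its variables are isolated. -/
def Clause.isolatedOnly (Q : Clause) : Prop := ∀ x ∈ Clause.vars Q, ¬ ChainedVar Q x

/-- A query clause is chained-only if all its variables are chained. -/
def Clause.chainedOnly (Q : Clause) : Prop := ∀ x ∈ Clause.vars Q, ChainedVar Q x

/-! ### The inferences of Q-AR -/

/-- The inferences of Q-AR: the T-Inf inferences together with the separation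
inferences (Sep) and the T-Trans renaming inferences, both introducing fresh,
smaller definer predicate symbols. -/
inductive QARInf (ord : Lit → Lit → Prop) (sel : SelFn) : List Clause → Clause → Prop
  | tinf {ps : List Clause} {c : Clause} : TInfInf ord sel ps c → QARInf ord sel ps c
  | sepL {C D : Clause} {ds : ℕ} {xs : List ℕ} :
      Separable C D → {x | x ∈ xs} = Clause.vars C ∩ Clause.vars D →
      ds ∉ Clause.preds (C ++ D) →
      QARInf ord sel [C ++ D] (Lit.mkNeg ⟨ds, xs.map Term.var⟩ :: C)
  | sepR {C D : Clause} {ds : ℕ} {xs : List ℕ} :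
      Separable C D → {x | x ∈ xs} = Clause.vars C ∩ Clause.vars D →
      ds ∉ Clause.preds (C ++ D) →
      QARInf ord sel [C ++ D] (Lit.mkPos ⟨ds, xs.map Term.var⟩ :: D)
  | ttransDef {E F : Clause} {d : ℕ} {xs : List ℕ} :
      {x | x ∈ xs} = Clause.vars E → d ∉ Clause.preds (F ++ E) →
      QARInf ord sel [F ++ E] (Lit.mkPos ⟨d, xs.map Term.var⟩ :: E)
  | ttransQ {E F : Clause} {d : ℕ} {xs : List ℕ} :
      {x | x ∈ xs} = Clause.vars E → d ∉ Clause.preds (F ++ E) →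
      QARInf ord sel [F ++ E] (F ++ [Lit.mkNeg ⟨d, xs.map Term.var⟩])

/-! ### Q-AR as a transition system on clause sets -/

/-- A single derivation step of the procedure Q-AR on clause sets: adding a
Res/TRes/Fact conclusion, replacement by a condensation, deletion of tautologies and
variants, separation (Sep) and the renaming T-Trans (both with fresh definer
predicate symbols). -/
inductive QARStep : Set Clause → Set Clause → Prop
  | res {N : Set Clause} {A B : Atom} {D1 D : Clause} {σ : Subst} :
      (Lit.mkPos B :: D1) ∈ N → (Lit.mkNeg A :: D) ∈ N → IsMGU σ A B →
      QARStep N (insert (Clause.subst σ (D1 ++ D)) N)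
  | tres {N : Set Clause} (t : TResApp) :
      (∀ i, t.sidePremise i ∈ N) → t.mainPremise ∈ N →
      (∀ i : Fin t.n, i.1 < t.m → Atom.subst t.σ (t.A i) = Atom.subst t.σ (t.B i)) →
      QARStep N (insert t.resolvent N)
  | fact {N : Set Clause} {A1 A2 : Atom} {C : Clause} {σ : Subst} :
      (C ++ [Lit.mkPos A1, Lit.mkPos A2]) ∈ N → IsMGU σ A1 A2 →
      QARStep N (insert (Clause.subst σ (C ++ [Lit.mkPos A1])) N)
  | conden {N : Set Clause} {C D : Clause} :
      C ∈ N → IsCondensation D C → QARStep N (insert D (N \ {C}))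
  | deleteTaut {N : Set Clause} {C : Clause} :
      C ∈ N → Tautology C → QARStep N (N \ {C})
  | deleteVariant {N : Set Clause} {C C' : Clause} :
      C ∈ N → C' ∈ N → C ≠ C' → Variant C C' → QARStep N (N \ {C})
  | sep {N : Set Clause} {C D : Clause} {ds : ℕ} {xs : List ℕ} :
      (C ++ D) ∈ N → Separable C D → {x | x ∈ xs} = Clause.vars C ∩ Clause.vars D →
      ds ∉ SetPreds N →
      QARStep N (insert (Lit.mkNeg ⟨ds, xs.map Term.var⟩ :: C)
        (insert (Lit.mkPos ⟨ds, xs.map Term.var⟩ :: D) (N \ {C ++ D})))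
  | ttrans {N : Set Clause} {E F : Clause} {d : ℕ} {xs : List ℕ} :
      (F ++ E) ∈ N → {x | x ∈ xs} = Clause.vars E → d ∉ SetPreds N →
      QARStep N (insert (F ++ [Lit.mkNeg ⟨d, xs.map Term.var⟩])
        (insert (Lit.mkPos ⟨d, xs.map Term.var⟩ :: E) (N \ {F ++ E})))

/-! ### Auxiliary lemmas for soundness -/

theorem Term.eval_app (I : Interp) (ν : ℕ → I.dom) (h : Head) (ts : List Term) :
    Term.eval I ν (.app h ts) = I.fn h (ts.map (Term.eval I ν)) := by
  rw [Term.eval]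
  exact congrArg _ List.attach_map_val

theorem Term.subst_app (σ : Subst) (h : Head) (ts : List Term) :
    Term.subst σ (.app h ts) = .app h (ts.map (Term.subst σ)) := by
  rw [Term.subst]
  exact congrArg _ List.attach_map_val

theorem Term.eval_congr' (I : Interp) (ν ν' : ℕ → I.dom) :
    ∀ (t : Term), (∀ x, t.HasVar x → ν x = ν' x) → t.eval I ν = t.eval I ν'
  | .var x, h => by rw [Term.eval, Term.eval]; exact h x (.var x)
  | .app f ts, h => by
    rw [Term.eval_app, Term.eval_app]
    congr 1
    refine List.map_congr_left fun t ht => ?_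
    exact Term.eval_congr' I ν ν' t (fun x hx => h x (.app ht hx))
  termination_by t => sizeOf t
  decreasing_by
    have := List.sizeOf_lt_of_mem ht
    simp only [Term.app.sizeOf_spec]
    omega

theorem Term.eval_subst' (I : Interp) (ν : ℕ → I.dom) (σ : Subst) :
    ∀ (t : Term), (t.subst σ).eval I ν = t.eval I (fun x => (σ x).eval I ν)
  | .var x => by rw [Term.subst, Term.eval]
  | .app f ts => by
    rw [Term.subst_app, Term.eval_app, Term.eval_app, List.map_map]
    congr 1
    refine List.map_congr_left fun t ht => ?_
    exact Term.eval_subst' I ν σ t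
  termination_by t => sizeOf t
  decreasing_by
    have := List.sizeOf_lt_of_mem ht
    simp only [Term.app.sizeOf_spec]
    omega

theorem Atom.holds_subst (I : Interp) (ν : ℕ → I.dom) (σ : Subst) (a : Atom) :
    (a.subst σ).holds I ν ↔ a.holds I (fun x => (σ x).eval I ν) := by
  unfold Atom.holds Atom.subst
  rw [List.map_map]
  simp only [Function.comp_def, Term.eval_subst']

theorem Lit.holds_subst (I : Interp) (ν : ℕ → I.dom) (σ : Subst) (L : Lit) :
    (L.subst σ).holds I ν ↔ L.holds I (fun x => (σ x).eval I ν) := by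
  unfold Lit.holds Lit.subst
  cases L.pos <;> simp [Atom.holds_subst]

theorem Clause.holdsUnder_subst (I : Interp) (ν : ℕ → I.dom) (σ : Subst) (C : Clause) :
    Clause.holdsUnder I ν (Clause.subst σ C) ↔
      Clause.holdsUnder I (fun x => (σ x).eval I ν) C := by
  unfold Clause.holdsUnder Clause.subst
  constructor
  · rintro ⟨L, hL, hh⟩
    obtain ⟨K, hK, rfl⟩ := List.mem_map.1 hL
    exact ⟨K, hK, (Lit.holds_subst I ν σ K).1 hh⟩
  · rintro ⟨K, hK, hh⟩
    exact ⟨K.subst σ, List.mem_map_of_mem hK, (Lit.holds_subst I ν σ K).2 hh⟩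

theorem Atom.holds_congr (I : Interp) {ν ν' : ℕ → I.dom} (a : Atom)
    (h : ∀ x ∈ a.vars, ν x = ν' x) : a.holds I ν ↔ a.holds I ν' := by
  unfold Atom.holds
  have : a.args.map (Term.eval I ν) = a.args.map (Term.eval I ν') := by
    refine List.map_congr_left fun t ht => ?_
    exact Term.eval_congr' I ν ν' t (fun x hx => h x ⟨t, ht, hx⟩)
  rw [this]

theorem Lit.holds_congr (I : Interp) {ν ν' : ℕ → I.dom} (L : Lit)
    (h : ∀ x ∈ L.vars, ν x = ν' x) : L.holds I ν ↔ L.holds I ν' := by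
  unfold Lit.holds
  cases L.pos <;> simp [Atom.holds_congr I L.atom h]

theorem Clause.holdsUnder_congr (I : Interp) {ν ν' : ℕ → I.dom} (C : Clause)
    (h : ∀ x ∈ Clause.vars C, ν x = ν' x) :
    Clause.holdsUnder I ν C ↔ Clause.holdsUnder I ν' C := by
  unfold Clause.holdsUnder
  constructor <;> rintro ⟨L, hL, hh⟩ <;> refine ⟨L, hL, ?_⟩
  · exact (Lit.holds_congr I L (fun x hx => h x ⟨L, hL, hx⟩)).1 hh
  · exact (Lit.holds_congr I L (fun x hx => h x ⟨L, hL, hx⟩)).2 hh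

/-- Replacing the interpretation of predicate symbols. -/
def Interp.withPr (I : Interp) (pr' : ℕ → List I.dom → Prop) : Interp :=
  ⟨I.dom, I.nonempty, I.fn, pr'⟩

theorem Term.eval_withPr (I : Interp) (pr' : ℕ → List I.dom → Prop) (ν : ℕ → I.dom) :
    ∀ (t : Term), Term.eval (I.withPr pr') ν t = Term.eval I ν t
  | .var x => by exact (Term.eval.eq_1 (I.withPr pr') ν x).trans (Term.eval.eq_1 I ν x).symm
  | .app f ts => by
    refine (Term.eval_app (I.withPr pr') ν f ts).trans ?_
    rw [Term.eval_app]
    show I.fn f _ = _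
    congr 1
    refine List.map_congr_left fun t ht => ?_
    exact Term.eval_withPr I pr' ν t
  termination_by t => sizeOf t
  decreasing_by
    have := List.sizeOf_lt_of_mem ht
    simp only [Term.app.sizeOf_spec]
    omega

theorem Clause.holdsUnder_withPr (I : Interp) (pr' : ℕ → List I.dom → Prop)
    (C : Clause) (hsame : ∀ p ∈ Clause.preds C, ∀ args, pr' p args ↔ I.pr p args)
    (ν : ℕ → I.dom) :
    Clause.holdsUnder (I.withPr pr') ν C ↔ Clause.holdsUnder I ν C := by
  unfold Clause.holdsUnder
  refine exists_congr fun L => and_congr_right fun hL => ?_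
  have hargs : L.atom.args.map (Term.eval (I.withPr pr') ν)
      = L.atom.args.map (Term.eval I ν) :=
    List.map_congr_left fun t ht => Term.eval_withPr I pr' ν t
  have ha : Atom.holds (I.withPr pr') ν L.atom ↔ Atom.holds I ν L.atom := by
    unfold Atom.holds
    rw [hargs]
    exact hsame L.atom.pred ⟨L, hL, rfl⟩ _
  unfold Lit.holds
  cases L.pos <;> simp [ha]


theorem Term.eval_var (I : Interp) (ν : ℕ → I.dom) (x : ℕ) :
    Term.eval I ν (.var x) = ν x := by rw [Term.eval]

theorem Lit.holds_mkPos (I : Interp) (ν : ℕ → I.dom) (a : Atom) :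
    (Lit.mkPos a).holds I ν ↔ a.holds I ν := by simp [Lit.holds, Lit.mkPos]

theorem Lit.holds_mkNeg (I : Interp) (ν : ℕ → I.dom) (a : Atom) :
    (Lit.mkNeg a).holds I ν ↔ ¬ a.holds I ν := by simp [Lit.holds, Lit.mkNeg]

theorem Atom.holds_unif (I : Interp) (ν : ℕ → I.dom) (σ : Subst) {a b : Atom}
    (h : a.subst σ = b.subst σ) :
    a.holds I (fun x => (σ x).eval I ν) ↔ b.holds I (fun x => (σ x).eval I ν) := by
  rw [← Atom.holds_subst, ← Atom.holds_subst, h]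

theorem Lit.holds_withPr (I : Interp) (pr' : ℕ → List I.dom → Prop) (ν : ℕ → I.dom)
    (L : Lit) (h : ∀ args, pr' L.atom.pred args ↔ I.pr L.atom.pred args) :
    L.holds (I.withPr pr') ν ↔ L.holds I ν := by
  have hargs : L.atom.args.map (Term.eval (I.withPr pr') ν)
      = L.atom.args.map (Term.eval I ν) :=
    List.map_congr_left fun t ht => Term.eval_withPr I pr' ν t
  have ha : Atom.holds (I.withPr pr') ν L.atom ↔ Atom.holds I ν L.atom := by
    unfold Atom.holds
    rw [hargs]
    exact h _
  unfold Lit.holds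
  cases L.pos <;> simp [ha]

theorem Atom.holds_flatVar (I : Interp) (ν : ℕ → I.dom) (p : ℕ) (xs : List ℕ) :
    Atom.holds I ν ⟨p, xs.map Term.var⟩ ↔ I.pr p (xs.map ν) := by
  unfold Atom.holds
  rw [List.map_map]
  have : (Term.eval I ν ∘ Term.var) = ν := funext fun x => Term.eval_var I ν x
  rw [this]

theorem Lit.vars_subset_clause {L : Lit} {C : Clause} (hL : L ∈ C) :
    L.vars ⊆ Clause.vars C := fun x hx => ⟨L, hL, hx⟩

theorem Clause.pred_ne_of_not_mem {L : Lit} {C : Clause} {p : ℕ}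
    (hL : L ∈ C) (hp : p ∉ Clause.preds C) : L.atom.pred ≠ p :=
  fun h => hp ⟨L, hL, h⟩

theorem List.map_eq_map_imp {α β : Type*} {f g : α → β} :
    ∀ {l : List α}, l.map f = l.map g → ∀ x ∈ l, f x = g x
  | [], _, x, hx => absurd hx List.not_mem_nil
  | a :: l, h, x, hx => by
    simp only [List.map_cons, List.cons.injEq] at h
    rw [List.mem_cons] at hx
    rcases hx with rfl | hx
    · exact h.1
    · exact List.map_eq_map_imp h.2 x hx

theorem Clause.trueIn_append_left {I : Interp} {C D : Clause}
    (h : Clause.trueIn I C) : Clause.trueIn I (C ++ D) := fun ν => by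
  obtain ⟨L, hL, hh⟩ := h ν
  exact ⟨L, List.mem_append_left _ hL, hh⟩

theorem Clause.trueIn_append_right {I : Interp} {C D : Clause}
    (h : Clause.trueIn I D) : Clause.trueIn I (C ++ D) := fun ν => by
  obtain ⟨L, hL, hh⟩ := h ν
  exact ⟨L, List.mem_append_right _ hL, hh⟩

/-- The top-variable inference system T-Inf is sound:  every application
of its rules preserves satisfiability.  The conclusions of Res, TRes, Fact and Conden
are logical consequences of their premises;  Delete removes only tautologies or
variants;  Split and Sep preserve satisfiability as stated. -/
theorem tinf_sound :
    -- Res: the resolvent is a logical consequence of its premises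
    (∀ (A B : Atom) (D1 D : Clause) (σ : Subst), IsMGU σ A B →
        entails {Lit.mkPos B :: D1, Lit.mkNeg A :: D} (Clause.subst σ (D1 ++ D))) ∧
    -- TRes: the resolvent is a logical consequence of its premises
    (∀ t : TResApp,
        (∀ i : Fin t.n, i.1 < t.m → Atom.subst t.σ (t.A i) = Atom.subst t.σ (t.B i)) →
        entails ({C | C ∈ t.sidePremises} ∪ {t.mainPremise}) t.resolvent) ∧
    -- Fact: the factor is a logical consequence of its premise
    (∀ (A1 A2 : Atom) (C : Clause) (σ : Subst), IsMGU σ A1 A2 →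
        entails {C ++ [Lit.mkPos A1, Lit.mkPos A2]}
          (Clause.subst σ (C ++ [Lit.mkPos A1]))) ∧
    -- Conden: the condensation is a logical consequence of its premise (and conversely)
    (∀ C D : Clause, IsCondensation D C → entails {C} D ∧ entails {D} C) ∧
    -- Delete: removing a tautology preserves satisfiability
    (∀ (N : Set Clause) (C : Clause), Tautology C →
        (satisfiable (N ∪ {C}) ↔ satisfiable N)) ∧
    -- Delete: removing a variant of a clause of N preserves satisfiability
    (∀ (N : Set Clause) (C C' : Clause), C' ∈ N → Variant C C' →
        (satisfiable (N ∪ {C}) ↔ satisfiable N)) ∧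
    -- Split: N ∪ {C ∨ D} with C, D non-empty and variable-disjoint is satisfiable iff
    -- N ∪ {C} or N ∪ {D} is satisfiable
    (∀ (N : Set Clause) (C D : Clause), C ≠ [] → D ≠ [] →
        Clause.vars C ∩ Clause.vars D = ∅ →
        (satisfiable (N ∪ {C ++ D}) ↔ (satisfiable (N ∪ {C}) ∨ satisfiable (N ∪ {D})))) ∧
    -- Sep: separation replaces a clause set by an equisatisfiable one
    (∀ (N : Set Clause) (C D : Clause) (ds : ℕ) (xs : List ℕ), Separable C D →
        {x | x ∈ xs} = Clause.vars C ∩ Clause.vars D →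
        ds ∉ SetPreds N ∪ Clause.preds (C ++ D) →
        (satisfiable (N ∪ {C ++ D}) ↔
          satisfiable (N ∪ {Lit.mkNeg ⟨ds, xs.map Term.var⟩ :: C,
                            Lit.mkPos ⟨ds, xs.map Term.var⟩ :: D}))) := by
  refine ⟨?_, ?_, ?_, ?_, ?_, ?_, ?_, ?_⟩
  -- Res
  · intro A B D1 D σ hmgu I hI ν
    rw [Clause.holdsUnder_subst]
    obtain ⟨L1, hL1, hh1⟩ := hI _ (Set.mem_insert _ _) (fun x => (σ x).eval I ν)
    obtain ⟨L2, hL2, hh2⟩ := hI _ (Set.mem_insert_of_mem _ rfl) (fun x => (σ x).eval I ν)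
    rw [List.mem_cons] at hL1 hL2
    rcases hL1 with rfl | hL1
    · rcases hL2 with rfl | hL2
      · exfalso
        rw [Lit.holds_mkPos] at hh1
        rw [Lit.holds_mkNeg] at hh2
        exact hh2 ((Atom.holds_unif I ν σ hmgu.1).2 hh1)
      · exact ⟨L2, List.mem_append_right _ hL2, hh2⟩
    · exact ⟨L1, List.mem_append_left _ hL1, hh1⟩
  -- TRes
  · intro t hσ I hI ν
    rw [TResApp.resolvent, Clause.holdsUnder_subst]
    obtain ⟨L, hL, hh⟩ := hI t.mainPremise (Set.mem_union_right _ rfl) (fun x => (t.σ x).eval I ν)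
    rw [TResApp.mainPremise, List.mem_append] at hL
    rcases hL with hL | hL
    · obtain ⟨i, rfl⟩ := List.mem_ofFn.1 hL
      by_cases him : i.1 < t.m
      · -- use side premise i
        have hside : t.sidePremise i ∈ {C | C ∈ t.sidePremises} ∪ {t.mainPremise} :=
          Set.mem_union_left _ (List.mem_ofFn.2 ⟨i, rfl⟩)
        obtain ⟨K, hK, hKh⟩ := hI _ hside (fun x => (t.σ x).eval I ν)
        rw [TResApp.sidePremise, List.mem_cons] at hK
        rcases hK with rfl | hK
        · exfalso
          rw [Lit.holds_mkPos] at hKh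
          rw [Lit.holds_mkNeg] at hh
          exact hh ((Atom.holds_unif I ν t.σ (hσ i him)).2 hKh)
        · refine ⟨K, ?_, hKh⟩
          refine List.mem_append_left _ (List.mem_append_left _ ?_)
          exact List.mem_flatMap.2 ⟨i, List.mem_filter.2 ⟨List.mem_finRange i, by simpa using him⟩, hK⟩
      · refine ⟨Lit.mkNeg (t.A i), ?_, hh⟩
        refine List.mem_append_left _ (List.mem_append_right _ ?_)
        exact List.mem_map.2 ⟨i, List.mem_filter.2 ⟨List.mem_finRange i, by simpa using him⟩, rfl⟩
    · exact ⟨L, List.mem_append_right _ hL, hh⟩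
  -- Fact
  · intro A1 A2 C σ hmgu I hI ν
    rw [Clause.holdsUnder_subst]
    obtain ⟨L, hL, hh⟩ := hI _ rfl (fun x => (σ x).eval I ν)
    rw [List.mem_append] at hL
    rcases hL with hL | hL
    · exact ⟨L, List.mem_append_left _ hL, hh⟩
    · simp only [List.mem_cons, List.mem_singleton, List.not_mem_nil, or_false] at hL
      rcases hL with rfl | rfl
      · exact ⟨Lit.mkPos A1, List.mem_append_right _ (List.mem_singleton.2 rfl), hh⟩
      · refine ⟨Lit.mkPos A1, List.mem_append_right _ (List.mem_singleton.2 rfl), ?_⟩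
        rw [Lit.holds_mkPos] at hh ⊢
        exact (Atom.holds_unif I ν σ hmgu.1).2 hh
  -- Conden
  · rintro C D ⟨hsub, hlt, σ, hiff⟩
    constructor
    · intro I hI ν
      obtain ⟨L, hL, hh⟩ := hI C rfl (fun x => (σ x).eval I ν)
      refine ⟨L.subst σ, (hiff _).2 (List.mem_map_of_mem hL), ?_⟩
      exact (Lit.holds_subst I ν σ L).2 hh
    · intro I hI ν
      obtain ⟨L, hL, hh⟩ := hI D rfl ν
      exact ⟨L, Multiset.mem_coe.1 (Multiset.mem_of_le hsub (Multiset.mem_coe.2 hL)), hh⟩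
  -- Delete tautology
  · intro N C htaut
    constructor
    · rintro ⟨I, hI⟩
      exact ⟨I, fun E hE => hI E (Set.mem_union_left _ hE)⟩
    · rintro ⟨I, hI⟩
      refine ⟨I, fun E hE => ?_⟩
      rcases hE with hE | rfl
      · exact hI E hE
      · exact fun ν => htaut I ν
  -- Delete variant
  · rintro N C C' hC' ⟨⟨σ, hσ⟩, ⟨ρ, hρ⟩⟩
    constructor
    · rintro ⟨I, hI⟩
      exact ⟨I, fun E hE => hI E (Set.mem_union_left _ hE)⟩
    · rintro ⟨I, hI⟩
      refine ⟨I, fun E hE => ?_⟩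
      rcases hE with hE | rfl
      · exact hI E hE
      · intro ν
        rw [← hρ, Clause.holdsUnder_subst]
        exact hI C' hC' _
  -- Split
  · intro N C D hC hD hdis
    constructor
    · rintro ⟨I, hI⟩
      by_cases hc : Clause.trueIn I C
      · refine Or.inl ⟨I, fun E hE => ?_⟩
        rcases hE with hE | hE
        · exact hI E (Set.mem_union_left _ hE)
        · rw [Set.mem_singleton_iff] at hE
          rw [hE]
          exact hc
      · refine Or.inr ⟨I, fun E hE => ?_⟩
        rcases hE with hE | hE
        · exact hI E (Set.mem_union_left _ hE)
        · rw [Set.mem_singleton_iff] at hE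
          rw [hE]
          -- show D is true in I
          simp only [Clause.trueIn, not_forall] at hc
          obtain ⟨ν₀, hν₀⟩ := hc
          intro ν
          classical
          obtain ⟨L, hL, hh⟩ := hI (C ++ D) (Set.mem_union_right _ rfl)
            (fun x => if x ∈ Clause.vars C then ν₀ x else ν x)
          rw [List.mem_append] at hL
          rcases hL with hL | hL
          · exfalso
            refine hν₀ ⟨L, hL, ?_⟩
            refine (Lit.holds_congr I L fun x hx => ?_).1 hh
            exact if_pos (Lit.vars_subset_clause hL hx)
          · refine ⟨L, hL, ?_⟩
            refine (Lit.holds_congr I L fun x hx => ?_).1 hh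
            refine if_neg fun hxC => ?_
            have : x ∈ Clause.vars C ∩ Clause.vars D :=
              ⟨hxC, Lit.vars_subset_clause hL hx⟩
            rw [hdis] at this
            exact this
    · rintro (⟨I, hI⟩ | ⟨I, hI⟩)
      · refine ⟨I, fun E hE => ?_⟩
        rcases hE with hE | hE
        · exact hI E (Set.mem_union_left _ hE)
        · rw [Set.mem_singleton_iff] at hE
          rw [hE]
          exact Clause.trueIn_append_left (hI C (Set.mem_union_right _ rfl))
      · refine ⟨I, fun E hE => ?_⟩
        rcases hE with hE | hE
        · exact hI E (Set.mem_union_left _ hE)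
        · rw [Set.mem_singleton_iff] at hE
          rw [hE]
          exact Clause.trueIn_append_right (hI D (Set.mem_union_right _ rfl))
  -- Sep
  · intro N C D ds xs hsep hxs hds
    have hdsN : ds ∉ SetPreds N := fun h => hds (Set.mem_union_left _ h)
    have hdsCD : ds ∉ Clause.preds (C ++ D) := fun h => hds (Set.mem_union_right _ h)
    have hdsC : ds ∉ Clause.preds C := fun ⟨L, hL, hp⟩ =>
      hdsCD ⟨L, List.mem_append_left _ hL, hp⟩
    have hdsD : ds ∉ Clause.preds D := fun ⟨L, hL, hp⟩ =>
      hdsCD ⟨L, List.mem_append_right _ hL, hp⟩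
    constructor
    · rintro ⟨I, hI⟩
      classical
      set pr' : ℕ → List I.dom → Prop := fun p args =>
        if p = ds then (∀ μ : ℕ → I.dom, xs.map μ = args → Clause.holdsUnder I μ C)
        else I.pr p args with hpr'
      have hprne : ∀ p, p ≠ ds → ∀ args, pr' p args ↔ I.pr p args := by
        intro p hp args
        rw [hpr']
        simp [hp]
      have hprds : ∀ args, pr' ds args ↔
          (∀ μ : ℕ → I.dom, xs.map μ = args → Clause.holdsUnder I μ C) := by
        intro args
        rw [hpr']
        simp
      refine ⟨I.withPr pr', fun E hE => ?_⟩
      rcases hE with hE | hE | hE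
      · -- clauses of N
        intro ν
        rw [Clause.holdsUnder_withPr I pr' E
          (fun p hp args => hprne p (fun h => hdsN ⟨E, hE, h ▸ hp⟩) args) ν]
        exact hI E (Set.mem_union_left _ hE) ν
      · -- ¬d ∨ C
        subst hE
        intro ν
        by_cases hd : pr' ds (xs.map ν)
        · obtain ⟨L, hL, hh⟩ := (hprds _).1 hd ν rfl
          refine ⟨L, List.mem_cons_of_mem _ hL, ?_⟩
          rw [Lit.holds_withPr I pr' ν L
            (hprne _ (Clause.pred_ne_of_not_mem hL hdsC) )]
          exact hh
        · refine ⟨_, List.mem_cons_self, ?_⟩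
          rw [Lit.holds_mkNeg]
          intro hcon
          rw [show Atom.holds (I.withPr pr') ν ⟨ds, xs.map Term.var⟩ ↔ pr' ds (xs.map ν) from
            Atom.holds_flatVar (I.withPr pr') ν ds xs] at hcon
          exact hd hcon
      · -- d ∨ D
        rw [Set.mem_singleton_iff] at hE
        subst hE
        intro ν
        by_cases hd : pr' ds (xs.map ν)
        · refine ⟨_, List.mem_cons_self, ?_⟩
          rw [Lit.holds_mkPos]
          rw [show Atom.holds (I.withPr pr') ν ⟨ds, xs.map Term.var⟩ ↔ pr' ds (xs.map ν) from
            Atom.holds_flatVar (I.withPr pr') ν ds xs]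
          exact hd
        · rw [hprds] at hd
          push_neg at hd
          obtain ⟨μ, hμeq, hμC⟩ := hd
          have hμν : ∀ x ∈ xs, μ x = ν x := List.map_eq_map_imp hμeq
          obtain ⟨L, hL, hh⟩ := hI (C ++ D) (Set.mem_union_right _ rfl)
            (fun x => if x ∈ Clause.vars C then μ x else ν x)
          rw [List.mem_append] at hL
          rcases hL with hL | hL
          · exfalso
            refine hμC ⟨L, hL, (Lit.holds_congr I L fun x hx => ?_).1 hh⟩
            exact if_pos (Lit.vars_subset_clause hL hx)
          · have hhν : L.holds I ν := by
              refine (Lit.holds_congr I L fun x hx => ?_).1 hh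
              by_cases hxC : x ∈ Clause.vars C
              · refine (if_pos hxC).trans ?_
                have : x ∈ Clause.vars C ∩ Clause.vars D :=
                  ⟨hxC, Lit.vars_subset_clause hL hx⟩
                rw [← hxs] at this
                exact hμν x this
              · exact if_neg hxC
            refine ⟨L, List.mem_cons_of_mem _ hL, ?_⟩
            rw [Lit.holds_withPr I pr' ν L
              (hprne _ (Clause.pred_ne_of_not_mem hL hdsD))]
            exact hhν
    · rintro ⟨I, hI⟩
      refine ⟨I, fun E hE => ?_⟩
      rcases hE with hE | rfl
      · exact hI E (Set.mem_union_left _ hE)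
      · intro ν
        by_cases hd : Atom.holds I ν ⟨ds, xs.map Term.var⟩
        · obtain ⟨L, hL, hh⟩ := hI _ (Set.mem_union_right _ (Set.mem_insert _ _)) ν
          rw [List.mem_cons] at hL
          rcases hL with rfl | hL
          · exact absurd hd ((Lit.holds_mkNeg I ν _).1 hh)
          · exact ⟨L, List.mem_append_left _ hL, hh⟩
        · obtain ⟨L, hL, hh⟩ := hI _
            (Set.mem_union_right _ (Set.mem_insert_of_mem _ rfl)) ν
          rw [List.mem_cons] at hL
          rcases hL with rfl | hL
          · exact absurd ((Lit.holds_mkPos I ν _).1 hh) hd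
          · exact ⟨L, List.mem_append_right _ hL, hh⟩

end QGF
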